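/- (Knuth–Wilf) Let p be an odd prime and let p* be the least positive integer n such that p divides F_n. Given natural numbers m and n, write m = p*·q_m + r_m and n = p*·q_n + r_n with 0 ≤ r_m, r_n < p*, and set c = 1 if r_m + r_n ≥ p* and c = 0 otherwise. Then ν_p(C(m+n, m)_F) = c·ν_p(F_{p*}) + (the number of indices i ≥ 0 such that (q_m mod p^{i+1}) + (q_n mod p^{i+1}) + c ≥ p^{i+1}), i.e., the number of carries that occur to the left of the radix point when m/p* is added to n/p* in p-ary notation, plus ν_p(F_{p*}) if a carry occurs across the radix point. -/

import Mathlib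

/-- The fibotorial `n!_F = F_n · F_{n-1} ⋯ F_1`, with `0!_F = 1`. -/
def fibotorial (n : ℕ) : ℕ := ∏ i ∈ Finset.range n, Nat.fib (i + 1)

/-- The fibonomial coefficient `C(n,k)_F = n!_F / (k!_F · (n-k)!_F)` for `k ≤ n`,
and `0` otherwise. -/
def fibnomial (n k : ℕ) : ℕ :=
  if k ≤ n then fibotorial n / (fibotorial k * fibotorial (n - k)) else 0

/-- `p*`, the least positive integer `t` such that `p ∣ F_t` (the Fibonacci entry point). -/
noncomputable def fibEntry (p : ℕ) : ℕ := sInf {t : ℕ | 0 < t ∧ p ∣ Nat.fib t}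



open Nat Finset

lemma exists_fib_entry (p : ℕ) (hp : 2 ≤ p) : ∃ t, 0 < t ∧ p ∣ Nat.fib t := by
  haveI : NeZero p := ⟨by omega⟩
  set f : ℕ → ZMod p × ZMod p := fun n => (Nat.fib n, Nat.fib (n + 1)) with hf
  have hstep : ∀ n, f (n + 1) = (fun x : ZMod p × ZMod p => (x.2, x.1 + x.2)) (f n) := by
    intro n
    simp only [hf]
    have : Nat.fib (n + 2) = Nat.fib n + Nat.fib (n + 1) := Nat.fib_add_two
    simp [this]
  have hS : Function.Injective (fun x : ZMod p × ZMod p => (x.2, x.1 + x.2)) := by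
    intro ⟨a, b⟩ ⟨c, d⟩ h
    simp only [Prod.mk.injEq] at h ⊢
    obtain ⟨h1, h2⟩ := h
    constructor
    · have := h2; rw [h1] at this; exact add_right_cancel this
    · exact h1
  have key : ∀ a d, f a = f (a + d) → f 0 = f d := by
    intro a
    induction a with
    | zero => intro d h; simpa using h
    | succ a ih =>
      intro d h
      apply ih
      have : (a + 1) + d = (a + d) + 1 := by omega
      rw [this] at h
      rw [hstep, hstep] at h
      exact hS h
  have : ¬ Function.Injective f := not_injective_infinite_finite f
  rw [Function.not_injective_iff] at this
  obtain ⟨a, b, hab, hne⟩ := this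
  rcases Nat.lt_or_ge a b with h | h
  · refine ⟨b - a, by omega, ?_⟩
    have := key a (b - a) (by rw [show a + (b - a) = b by omega]; exact hab)
    have h0 : (Nat.fib (b - a) : ZMod p) = 0 := by
      have := congrArg Prod.fst this
      simp [hf] at this
      simpa using this.symm
    exact (ZMod.natCast_eq_zero_iff _ _).mp h0
  · have hlt : b < a := by omega
    refine ⟨a - b, by omega, ?_⟩
    have := key b (a - b) (by rw [show b + (a - b) = a by omega]; exact hab.symm)
    have h0 : (Nat.fib (a - b) : ZMod p) = 0 := by
      have := congrArg Prod.fst this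
      simp [hf] at this
      simpa using this.symm
    exact (ZMod.natCast_eq_zero_iff _ _).mp h0

lemma fibEntry_mem (p : ℕ) (hp : 2 ≤ p) : 0 < fibEntry p ∧ p ∣ Nat.fib (fibEntry p) := by
  have h : {t : ℕ | 0 < t ∧ p ∣ Nat.fib t}.Nonempty := exists_fib_entry p hp
  exact Nat.sInf_mem h

lemma fibEntry_min (p : ℕ) {n : ℕ} (hn : 0 < n) (h : p ∣ Nat.fib n) : fibEntry p ≤ n :=
  Nat.sInf_le ⟨hn, h⟩

lemma fibEntry_two_le (p : ℕ) (hp : 2 ≤ p) : 2 ≤ fibEntry p := by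
  obtain ⟨hpos, hdvd⟩ := fibEntry_mem p hp
  by_contra h
  have h1 : fibEntry p = 1 := by omega
  rw [h1] at hdvd
  simp [Nat.fib_one] at hdvd
  omega

lemma fib_entry_dvd_iff (p : ℕ) (hp : 2 ≤ p) (n : ℕ) : p ∣ Nat.fib n ↔ fibEntry p ∣ n := by
  obtain ⟨hpos, hdvd⟩ := fibEntry_mem p hp
  constructor
  · intro h
    rcases Nat.eq_zero_or_pos n with rfl | hn
    · exact Dvd.intro 0 rfl
    have hg : p ∣ Nat.gcd (Nat.fib n) (Nat.fib (fibEntry p)) := Nat.dvd_gcd h hdvd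
    rw [← Nat.fib_gcd] at hg
    have h1 : fibEntry p ≤ Nat.gcd n (fibEntry p) :=
      fibEntry_min p (Nat.gcd_pos_of_pos_left _ hn) hg
    have h2 : Nat.gcd n (fibEntry p) ∣ n := Nat.gcd_dvd_left _ _
    have h3 : Nat.gcd n (fibEntry p) ∣ fibEntry p := Nat.gcd_dvd_right _ _
    have := Nat.le_of_dvd hpos h3
    have : Nat.gcd n (fibEntry p) = fibEntry p := by omega
    rwa [← this]
  · intro h
    exact hdvd.trans (Nat.fib_dvd _ _ h)

open Matrix in
noncomputable def Mfib : Matrix (Fin 2) (Fin 2) ℤ := !![1,1;1,0]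

lemma Mfib_pow (n : ℕ) : Mfib ^ (n+1) =
    !![(Nat.fib (n+2) : ℤ), Nat.fib (n+1); Nat.fib (n+1), Nat.fib n] := by
  induction n with
  | zero => simp [Mfib, pow_one]
  | succ n ih =>
    rw [pow_succ, ih, Mfib, Matrix.mul_fin_two]
    have h1 : Nat.fib (n+3) = Nat.fib (n+1) + Nat.fib (n+2) := Nat.fib_add_two
    have h2 : Nat.fib (n+2) = Nat.fib n + Nat.fib (n+1) := Nat.fib_add_two
    congr 1 <;> push_cast [h1, h2] <;> ring

lemma Mfib_entry (n : ℕ) : (Mfib ^ n) 0 1 = (Nat.fib n : ℤ) := by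
  cases n with
  | zero => simp [Matrix.one_apply]
  | succ n => rw [Mfib_pow]; simp

lemma Mfib_decomp (n : ℕ) : Mfib ^ (n+1) =
    (Nat.fib (n+1) : ℤ) • Mfib + (Nat.fib n : ℤ) • (1 : Matrix (Fin 2) (Fin 2) ℤ) := by
  rw [Mfib_pow, Matrix.one_fin_two, Mfib]
  have h2 : Nat.fib (n+2) = Nat.fib n + Nat.fib (n+1) := Nat.fib_add_two
  ext i j
  fin_cases i <;> fin_cases j <;> simp [h2] <;> push_cast <;> ring

lemma fib_expand (t k : ℕ) (ht : 1 ≤ t) :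
    (Nat.fib (t*k) : ℤ) = ∑ i ∈ Finset.range (k+1),
      (k.choose i : ℤ) * Nat.fib t ^ i * Nat.fib (t-1) ^ (k-i) * Nat.fib i := by
  obtain ⟨n, rfl⟩ : ∃ n, t = n + 1 := ⟨t-1, by omega⟩
  have h1 : Mfib ^ ((n+1)*k) = (Mfib ^ (n+1))^k := by rw [← pow_mul]
  rw [Mfib_decomp] at h1
  have hcomm : Commute ((Nat.fib (n+1):ℤ) • Mfib) ((Nat.fib n : ℤ) • (1 : Matrix (Fin 2) (Fin 2) ℤ)) := by
    apply Commute.smul_left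
    apply Commute.smul_right
    exact Commute.one_right _
  rw [hcomm.add_pow] at h1
  have h2 := congrArg (fun A : Matrix (Fin 2) (Fin 2) ℤ => A 0 1) h1
  simp only [Matrix.sum_apply] at h2
  rw [Mfib_entry] at h2
  rw [h2]
  apply Finset.sum_congr rfl
  intro i hi
  have hc : ((k.choose i : ℕ) : Matrix (Fin 2) (Fin 2) ℤ)
      = ((k.choose i : ℕ):ℤ) • (1 : Matrix (Fin 2) (Fin 2) ℤ) := by
    have h : ((k.choose i : ℕ):ℤ) • (1 : Matrix (Fin 2) (Fin 2) ℤ)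
        = (((k.choose i : ℕ):ℤ) : Matrix (Fin 2) (Fin 2) ℤ) * 1 := by
      rw [zsmul_eq_mul]
    rw [h, mul_one]
    norm_cast
  rw [smul_pow, smul_pow, one_pow, hc, smul_mul_assoc, mul_smul_comm, mul_one]
  simp only [mul_smul_comm, smul_mul_assoc, mul_one, Matrix.smul_apply, Mfib_entry, smul_eq_mul]
  push_cast
  ring

def Hsum (t k : ℕ) : ℕ :=
  ∑ i ∈ Finset.range (k-1), k.choose (i+2) * Nat.fib t ^ i * Nat.fib (t-1) ^ (k-2-i) * Nat.fib (i+2)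

lemma fib_mul_eq (t k : ℕ) (ht : 1 ≤ t) (hk : 1 ≤ k) :
    Nat.fib (t*k) = Nat.fib t * (k * Nat.fib (t-1)^(k-1) + Nat.fib t * Hsum t k) := by
  have : (Nat.fib (t*k) : ℤ)
      = (Nat.fib t : ℤ) * (k * Nat.fib (t-1)^(k-1) + Nat.fib t * Hsum t k) := by
    obtain ⟨k', rfl⟩ : ∃ k', k = k' + 1 := ⟨k-1, by omega⟩
    rw [fib_expand t (k'+1) ht, Finset.sum_range_succ']
    simp only [Nat.fib_zero, Nat.cast_zero, mul_zero, add_zero]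
    rw [Finset.sum_range_succ']
    have hH : (Hsum t (k'+1) : ℤ) = ∑ i ∈ Finset.range k',
        ((k'+1).choose (i+2) : ℤ) * Nat.fib t ^ i * Nat.fib (t-1) ^ (k'+1-2-i) * Nat.fib (i+2) := by
      simp only [Hsum]
      push_cast
      simp
    rw [hH, mul_add]
    simp only [Finset.mul_sum]
    rw [add_comm]
    congr 1
    · simp [Nat.choose_one_right]
      push_cast
      ring
    · apply Finset.sum_congr rfl
      intro i hi
      have he : k' + 1 - (i+1+1) = k' + 1 - 2 - i := by omega
      rw [he]
      push_cast
      ring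
  exact_mod_cast this

lemma dvd_Hsum (p t : ℕ) (hp : p.Prime) (hodd : Odd p) (hdvd : p ∣ Nat.fib t) :
    p ∣ Hsum t p := by
  have hp3 : 3 ≤ p := by
    have h2 := hp.two_le
    have h3 := Nat.odd_iff.mp hodd
    omega
  apply Finset.dvd_sum
  intro i hi
  simp only [Finset.mem_range] at hi
  rcases Nat.lt_or_ge (i+2) p with h | h
  · have : p ∣ p.choose (i+2) := hp.dvd_choose_self (by omega) h
    exact Dvd.dvd.mul_right (Dvd.dvd.mul_right (Dvd.dvd.mul_right this _) _) _
  · have hi2 : i + 2 = p := by omega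
    have h1 : 1 ≤ i := by omega
    have : p ∣ Nat.fib t ^ i := dvd_pow hdvd (by omega)
    exact Dvd.dvd.mul_right (Dvd.dvd.mul_right (Dvd.dvd.mul_left this _) _) _

lemma not_dvd_fib_pred (p t : ℕ) (hp : p.Prime) (ht : 1 ≤ t) (hdvd : p ∣ Nat.fib t) :
    ¬ p ∣ Nat.fib (t-1) := by
  intro h
  have hco : Nat.Coprime (Nat.fib (t-1)) (Nat.fib (t-1+1)) := Nat.fib_coprime_fib_succ (t-1)
  rw [show t - 1 + 1 = t by omega] at hco
  have := Nat.dvd_one.mp (hco ▸ Nat.dvd_gcd h hdvd)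
  have := hp.one_lt
  omega

lemma fib_two_le_of_dvd (p t : ℕ) (hp : p.Prime) (ht : 0 < t) (hdvd : p ∣ Nat.fib t) :
    2 ≤ t := by
  by_contra h
  have : t = 1 := by omega
  rw [this] at hdvd
  simp [Nat.fib_one] at hdvd
  have := hp.one_lt
  omega

lemma stepA (p t k : ℕ) (hp : p.Prime) (ht : 2 ≤ t) (hdvd : p ∣ Nat.fib t)
    (hk : 1 ≤ k) (hpk : ¬ p ∣ k) :
    padicValNat p (Nat.fib (t*k)) = padicValNat p (Nat.fib t) := by
  haveI : Fact p.Prime := ⟨hp⟩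
  set E := k * Nat.fib (t-1)^(k-1) + Nat.fib t * Hsum t k with hE
  have hfm : Nat.fib (t*k) = Nat.fib t * E := fib_mul_eq t k (by omega) hk
  have hpE : ¬ p ∣ E := by
    intro h
    have h1 : p ∣ k * Nat.fib (t-1)^(k-1) := by
      have h2 : p ∣ Nat.fib t * Hsum t k := Dvd.dvd.mul_right hdvd _
      exact (Nat.dvd_add_iff_left h2).mpr h
    rcases hp.dvd_mul.mp h1 with h | h
    · exact hpk h
    · exact not_dvd_fib_pred p t hp (by omega) hdvd (hp.dvd_of_dvd_pow h)
  have hEne : E ≠ 0 := by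
    have h1 : 0 < Nat.fib (t-1) := Nat.fib_pos.mpr (by omega)
    have : 0 < k * Nat.fib (t-1)^(k-1) := Nat.mul_pos hk (Nat.pow_pos h1)
    omega
  have hftne : Nat.fib t ≠ 0 := by
    have : 0 < Nat.fib t := Nat.fib_pos.mpr (by omega)
    omega
  rw [hfm, padicValNat.mul hftne hEne, padicValNat.eq_zero_of_not_dvd hpE, add_zero]

lemma stepB (p t : ℕ) (hp : p.Prime) (hodd : Odd p) (ht : 2 ≤ t) (hdvd : p ∣ Nat.fib t) :
    padicValNat p (Nat.fib (t*p)) = padicValNat p (Nat.fib t) + 1 := by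
  haveI : Fact p.Prime := ⟨hp⟩
  set E := p * Nat.fib (t-1)^(p-1) + Nat.fib t * Hsum t p with hE
  have hfm : Nat.fib (t*p) = Nat.fib t * E := fib_mul_eq t p (by omega) hp.one_lt.le
  have hp1 : p ∣ Hsum t p := dvd_Hsum p t hp hodd hdvd
  have hEdvd : p ∣ E := by
    apply Nat.dvd_add
    · exact Dvd.dvd.mul_right dvd_rfl _
    · exact Dvd.dvd.mul_right hdvd _
  have hE2 : ¬ p^2 ∣ E := by
    intro h
    have h2 : p^2 ∣ Nat.fib t * Hsum t p := by
      rw [sq]; exact mul_dvd_mul hdvd hp1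
    have h3 : p^2 ∣ p * Nat.fib (t-1)^(p-1) := (Nat.dvd_add_iff_left h2).mpr h
    have h4 : p ∣ Nat.fib (t-1)^(p-1) := by
      rw [sq] at h3
      exact (mul_dvd_mul_iff_left (show p ≠ 0 by have := hp.one_lt; omega)).mp h3
    exact not_dvd_fib_pred p t hp (by omega) hdvd (hp.dvd_of_dvd_pow h4)
  have hEne : E ≠ 0 := by
    have h1 : 0 < Nat.fib (t-1) := Nat.fib_pos.mpr (by omega)
    have : 0 < p * Nat.fib (t-1)^(p-1) :=
      Nat.mul_pos (by have := hp.one_lt; omega) (Nat.pow_pos h1)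
    omega
  have hftne : Nat.fib t ≠ 0 := by
    have : 0 < Nat.fib t := Nat.fib_pos.mpr (by omega)
    omega
  have hvE : padicValNat p E = 1 := by
    have hge : 1 ≤ padicValNat p E := one_le_padicValNat_of_dvd (by omega) hEdvd
    have hle : padicValNat p E ≤ 1 := by
      by_contra hcon
      push_neg at hcon
      exact hE2 ((pow_dvd_pow p (by omega)).trans pow_padicValNat_dvd)
    omega
  rw [hfm, padicValNat.mul hftne hEne, hvE]

lemma lte_pow (p t : ℕ) (hp : p.Prime) (hodd : Odd p) (ht : 2 ≤ t) (hdvd : p ∣ Nat.fib t) :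
    ∀ a : ℕ, padicValNat p (Nat.fib (t * p^a)) = padicValNat p (Nat.fib t) + a := by
  intro a
  induction a with
  | zero => simp
  | succ a ih =>
    have h1 : t * p^(a+1) = (t * p^a) * p := by ring
    have h2 : 2 ≤ t * p^a := le_trans ht (Nat.le_mul_of_pos_right t (Nat.pow_pos hp.pos))
    have h3 : p ∣ Nat.fib (t * p^a) :=
      hdvd.trans (Nat.fib_dvd _ _ (Dvd.intro _ rfl))
    rw [h1, stepB p (t * p^a) hp hodd h2 h3, ih, Nat.add_assoc]

lemma lte (p t k : ℕ) (hp : p.Prime) (hodd : Odd p) (ht : 2 ≤ t) (hdvd : p ∣ Nat.fib t)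
    (hk : 1 ≤ k) :
    padicValNat p (Nat.fib (t * k)) = padicValNat p (Nat.fib t) + padicValNat p k := by
  haveI : Fact p.Prime := ⟨hp⟩
  set a := padicValNat p k with ha
  obtain ⟨u, hu⟩ : p ^ a ∣ k := pow_padicValNat_dvd
  have hpu : ¬ p ∣ u := by
    intro h
    obtain ⟨v, rfl⟩ := h
    have : p ^ (a+1) ∣ k := by rw [hu]; ring_nf; exact ⟨v, by ring⟩
    have := (padicValNat_dvd_iff_le (by omega)).mp this
    omega
  have hu1 : 1 ≤ u := by
    rcases Nat.eq_zero_or_pos u with rfl | h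
    · omega
    · exact h
  have hva : padicValNat p (p ^ a * u) = a + padicValNat p u := by
    rw [padicValNat.mul (by have := hp.pos; positivity) (by omega), padicValNat.prime_pow]
  have h2 : 2 ≤ t * p^a := le_trans ht (Nat.le_mul_of_pos_right t (Nat.pow_pos hp.pos))
  have h3 : p ∣ Nat.fib (t * p^a) := hdvd.trans (Nat.fib_dvd _ _ (Dvd.intro _ rfl))
  calc padicValNat p (Nat.fib (t * k))
      = padicValNat p (Nat.fib ((t * p^a) * u)) := by rw [hu]; ring_nf
    _ = padicValNat p (Nat.fib (t * p^a)) := stepA p (t*p^a) u hp h2 h3 hu1 hpu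
    _ = padicValNat p (Nat.fib t) + a := lte_pow p t hp hodd ht hdvd a
    _ = padicValNat p (Nat.fib t) + padicValNat p k := rfl

lemma fibotorial_succ (n : ℕ) : fibotorial (n+1) = fibotorial n * Nat.fib (n+1) :=
  Finset.prod_range_succ _ _

lemma fibotorial_pos (n : ℕ) : 0 < fibotorial n :=
  Finset.prod_pos fun i _ => Nat.fib_pos.mpr (by omega)

lemma fibotorial_dvd : ∀ n k : ℕ, k ≤ n → fibotorial k * fibotorial (n-k) ∣ fibotorial n := by
  intro n
  induction n using Nat.strong_induction_on with
  | _ n ih =>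
    intro k hk
    rcases Nat.eq_zero_or_pos k with rfl | hk0
    · rw [show fibotorial 0 = 1 by simp [fibotorial], one_mul, Nat.sub_zero]
    rcases Nat.eq_or_lt_of_le hk with rfl | hkn
    · rw [Nat.sub_self, show fibotorial 0 = 1 by simp [fibotorial], mul_one]
    obtain ⟨k', rfl⟩ : ∃ k', k = k'+1 := ⟨k-1, by omega⟩
    obtain ⟨d, rfl⟩ : ∃ d, n = k' + 1 + d + 1 := ⟨n - k' - 2, by omega⟩
    rw [show k' + 1 + d + 1 - (k' + 1) = d + 1 by omega]
    have hF := Nat.fib_add d (k'+1)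
    rw [fibotorial_succ (k'+1+d), show k'+1+d+1 = d + (k'+1) + 1 by omega, hF, Nat.mul_add]
    apply dvd_add
    · have iha := ih (k'+1+d) (by omega) k' (by omega)
      rw [show k'+1+d-k' = d+1 by omega] at iha
      have h1 : fibotorial (k'+1) * fibotorial (d+1)
          = Nat.fib (k'+1) * (fibotorial k' * fibotorial (d+1)) := by
        rw [fibotorial_succ k']; ring
      rw [h1]
      calc Nat.fib (k'+1) * (fibotorial k' * fibotorial (d+1))
          ∣ Nat.fib (k'+1) * fibotorial (k'+1+d) := mul_dvd_mul_left _ iha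
        _ ∣ fibotorial (k'+1+d) * (Nat.fib d * Nat.fib (k'+1)) := ⟨Nat.fib d, by ring⟩
    · have ihb := ih (k'+1+d) (by omega) (k'+1) (by omega)
      rw [show k'+1+d-(k'+1) = d by omega] at ihb
      have h1 : fibotorial (k'+1) * fibotorial (d+1)
          = Nat.fib (d+1) * (fibotorial (k'+1) * fibotorial d) := by
        rw [fibotorial_succ d]; ring
      rw [h1]
      calc Nat.fib (d+1) * (fibotorial (k'+1) * fibotorial d)
          ∣ Nat.fib (d+1) * fibotorial (k'+1+d) := mul_dvd_mul_left _ ihb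
        _ ∣ fibotorial (k'+1+d) * (Nat.fib (d+1) * Nat.fib (k'+1+1)) := ⟨Nat.fib (k'+1+1), by ring⟩

lemma val_factorial_sum (p : ℕ) [Fact p.Prime] (M : ℕ) :
    padicValNat p (M !) = ∑ k ∈ Finset.Icc 1 M, padicValNat p k := by
  induction M with
  | zero => simp
  | succ M ih =>
    rw [Finset.sum_Icc_succ_top (by omega), ← ih, Nat.factorial_succ,
      padicValNat.mul (by omega) (by positivity), Nat.add_comm]

lemma val_fibotorial_sum (p : ℕ) [Fact p.Prime] (N : ℕ) :
    padicValNat p (fibotorial N) = ∑ i ∈ Finset.range N, padicValNat p (Nat.fib (i+1)) := by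
  induction N with
  | zero => simp [fibotorial]
  | succ N ih =>
    rw [fibotorial_succ, padicValNat.mul (by have := fibotorial_pos N; omega)
      (by have : 0 < Nat.fib (N+1) := Nat.fib_pos.mpr (by omega); omega), ih,
      Finset.sum_range_succ]

lemma val_fibotorial (p N : ℕ) (hp : p.Prime) (hodd : Odd p) :
    padicValNat p (fibotorial N) =
      (N / fibEntry p) * padicValNat p (Nat.fib (fibEntry p))
        + padicValNat p ((N / fibEntry p)!) := by
  haveI : Fact p.Prime := ⟨hp⟩
  set t := fibEntry p with htdef
  have ht2 : 2 ≤ t := fibEntry_two_le p hp.two_le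
  have htd : p ∣ Nat.fib t := (fibEntry_mem p hp.two_le).2
  rw [val_fibotorial_sum]
  have h1 : ∑ i ∈ Finset.range N, padicValNat p (Nat.fib (i+1))
      = ∑ i ∈ (Finset.range N).filter (fun i => t ∣ (i+1)),
          padicValNat p (Nat.fib (i+1)) := by
    symm
    apply Finset.sum_filter_of_ne
    intro i hi hne
    by_contra hnd
    exact hne (padicValNat.eq_zero_of_not_dvd
      (fun hped => hnd ((fib_entry_dvd_iff p hp.two_le (i+1)).mp hped)))
  rw [h1]
  have h2 : ∑ i ∈ (Finset.range N).filter (fun i => t ∣ (i+1)),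
        padicValNat p (Nat.fib (i+1))
      = ∑ k ∈ Finset.Icc 1 (N / t), padicValNat p (Nat.fib (t * k)) := by
    apply Finset.sum_nbij' (fun i => (i+1)/t) (fun k => t*k - 1)
    · intro i hi
      simp only [Finset.mem_filter, Finset.mem_range] at hi
      obtain ⟨hiN, hdvd⟩ := hi
      simp only [Finset.mem_Icc]
      constructor
      · have : t ≤ i + 1 := Nat.le_of_dvd (by omega) hdvd
        exact Nat.one_le_div_iff (by omega) |>.mpr this
      · exact Nat.div_le_div_right (by omega)
    · intro k hk
      simp only [Finset.mem_Icc] at hk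
      simp only [Finset.mem_filter, Finset.mem_range]
      have htk : t * k ≤ N := le_trans (Nat.mul_le_mul_left t hk.2) (Nat.mul_div_le N t)
      have htk1 : 1 ≤ t * k := by
        have := Nat.mul_le_mul ht2 hk.1; omega
      constructor
      · omega
      · rw [show t * k - 1 + 1 = t * k by omega]
        exact Dvd.intro _ rfl
    · intro i hi
      simp only [Finset.mem_filter, Finset.mem_range] at hi
      have := Nat.mul_div_cancel' hi.2
      omega
    · intro k hk
      simp only [Finset.mem_Icc] at hk
      have htk1 : 1 ≤ t * k := by
        have := Nat.mul_le_mul ht2 hk.1; omega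
      rw [show t * k - 1 + 1 = t * k by omega, Nat.mul_div_cancel_left k (by omega)]
    · intro i hi
      simp only [Finset.mem_filter, Finset.mem_range] at hi
      rw [Nat.mul_div_cancel' hi.2]
  rw [h2]
  have h3 : ∀ k ∈ Finset.Icc 1 (N / t), padicValNat p (Nat.fib (t * k))
      = padicValNat p (Nat.fib t) + padicValNat p k := by
    intro k hk
    simp only [Finset.mem_Icc] at hk
    exact lte p t k hp hodd ht2 htd hk.1
  rw [Finset.sum_congr rfl h3, Finset.sum_add_distrib, Finset.sum_const, Nat.card_Icc,
    val_factorial_sum]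
  simp [Nat.smul_one_eq_cast]

lemma key_div (d a b c : ℕ) (hd : 2 ≤ d) (hc : c ≤ 1) :
    (a+b+c)/d = a/d + b/d + (if d ≤ a%d + b%d + c then 1 else 0) := by
  set qa := a / d with hqa
  set ra := a % d with hra
  set qb := b / d with hqb
  set rb := b % d with hrb
  have ha : a = d * qa + ra := (Nat.div_add_mod a d).symm
  have hb : b = d * qb + rb := (Nat.div_add_mod b d).symm
  have hra' : ra < d := Nat.mod_lt a (by omega)
  have hrb' : rb < d := Nat.mod_lt b (by omega)
  rw [ha, hb]
  have h1 : d * qa + ra + (d * qb + rb) + c = d * (qa + qb) + (ra + rb + c) := by ring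
  rw [h1, Nat.mul_add_div (by omega)]
  congr 1
  rcases le_or_gt d (ra + rb + c) with h | h
  · rw [if_pos h, Nat.div_eq_sub_div (by omega) h, Nat.div_eq_of_lt (by omega)]
  · rw [if_neg (by omega), Nat.div_eq_of_lt h]

lemma kummer (p : ℕ) [Fact p.Prime] (a b c B : ℕ) (hc : c ≤ 1)
    (hB : a + b + c < p ^ B) :
    padicValNat p ((a+b+c)!) = padicValNat p (a !) + padicValNat p (b !) +
      ((Finset.range B).filter fun i => p ^ (i+1) ≤ a % p^(i+1) + b % p^(i+1) + c).card := by
  have hp2 : 2 ≤ p := (Fact.out : p.Prime).two_le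
  have hlog : ∀ x : ℕ, x ≤ a + b + c → Nat.log p x < B + 1 := by
    intro x hx
    rcases Nat.eq_zero_or_pos x with rfl | hpos
    · simp
    · apply Nat.log_lt_of_lt_pow (by omega)
      calc x ≤ a + b + c := hx
        _ < p ^ B := hB
        _ ≤ p ^ (B+1) := Nat.pow_le_pow_right (by omega) (by omega)
  rw [padicValNat_factorial (hlog _ le_rfl), padicValNat_factorial (hlog a (by omega)),
    padicValNat_factorial (hlog b (by omega))]
  have h1 : ∀ i ∈ Finset.Ico 1 (B+1), (a+b+c)/p^i
      = a/p^i + b/p^i + (if p^i ≤ a%p^i + b%p^i + c then 1 else 0) := by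
    intro i hi
    simp only [Finset.mem_Ico] at hi
    exact key_div (p^i) a b c (le_trans hp2 (Nat.le_self_pow (by omega) p)) hc
  rw [Finset.sum_congr rfl h1, Finset.sum_add_distrib, Finset.sum_add_distrib]
  congr 1
  rw [Finset.sum_Ico_eq_sum_range]
  rw [show B + 1 - 1 = B from rfl]
  rw [Finset.sum_congr rfl (fun i (_ : i ∈ Finset.range B) => by rw [Nat.add_comm 1 i])]
  exact (Finset.card_filter _ _).symm

lemma carry_set_eq (p a b c B : ℕ) (hp : 2 ≤ p) (hB : a + b + c < p ^ B) :
    {i : ℕ | p ^ (i+1) ≤ a % p^(i+1) + b % p^(i+1) + c} =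
      ↑((Finset.range B).filter fun i => p ^ (i+1) ≤ a % p^(i+1) + b % p^(i+1) + c) := by
  ext i
  simp only [Set.mem_setOf_eq, Finset.coe_filter, Finset.mem_range, Set.mem_setOf_eq]
  constructor
  · intro h
    refine ⟨?_, h⟩
    by_contra hB'
    push_neg at hB'
    have h2 : p ^ B ≤ p ^ (i+1) := Nat.pow_le_pow_right (by omega) (by omega)
    have h3 : a % p^(i+1) ≤ a := Nat.mod_le _ _
    have h4 : b % p^(i+1) ≤ b := Nat.mod_le _ _
    omega
  · exact fun h => h.2

/-- Knuth–Wilf: the `p`-adic valuation of `C(m+n, m)_F` equals the number of carries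
to the left of the radix point when `m/p*` is added to `n/p*` in base `p`, plus
`ν_p(F_{p*})` if a carry occurs across the radix point. -/
theorem knuth_wilf (p : ℕ) (hp : p.Prime) (hodd : Odd p) (m n : ℕ) :
    padicValNat p (fibnomial (m + n) m) =
      (if fibEntry p ≤ m % fibEntry p + n % fibEntry p then 1 else 0) *
          padicValNat p (Nat.fib (fibEntry p)) +
        Set.ncard {i : ℕ |
          p ^ (i + 1) ≤ m / fibEntry p % p ^ (i + 1) + n / fibEntry p % p ^ (i + 1) +
            (if fibEntry p ≤ m % fibEntry p + n % fibEntry p then 1 else 0)} := by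
  haveI : Fact p.Prime := ⟨hp⟩
  set t := fibEntry p with htdef
  have ht2 : 2 ≤ t := fibEntry_two_le p hp.two_le
  set c := if t ≤ m % t + n % t then 1 else 0 with hcdef
  have hc1 : c ≤ 1 := by rw [hcdef]; split <;> omega
  have hdiv : (m+n)/t = m/t + n/t + c := by
    rw [hcdef]
    simpa using key_div t m n 0 ht2 (by omega)
  have hmn : m ≤ m + n := Nat.le_add_right m n
  have hq : fibnomial (m+n) m = fibotorial (m+n) / (fibotorial m * fibotorial n) := by
    rw [fibnomial, if_pos hmn, Nat.add_sub_cancel_left]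
  have hdvd : fibotorial m * fibotorial n ∣ fibotorial (m+n) := by
    have := fibotorial_dvd (m+n) m hmn
    rwa [Nat.add_sub_cancel_left] at this
  have heq : fibotorial (m+n) = fibotorial m * fibotorial n * fibnomial (m+n) m := by
    rw [hq]
    exact (Nat.mul_div_cancel' hdvd).symm
  have hne1 : fibotorial m ≠ 0 := by have := fibotorial_pos m; omega
  have hne2 : fibotorial n ≠ 0 := by have := fibotorial_pos n; omega
  have hne3 : fibnomial (m+n) m ≠ 0 := by
    intro h
    have := fibotorial_pos (m+n)
    rw [heq, h, mul_zero] at this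
    omega
  have hval : padicValNat p (fibotorial (m+n)) = padicValNat p (fibotorial m)
      + padicValNat p (fibotorial n) + padicValNat p (fibnomial (m+n) m) := by
    rw [heq, padicValNat.mul (Nat.mul_ne_zero hne1 hne2) hne3, padicValNat.mul hne1 hne2]
  have hm := val_fibotorial p m hp hodd
  have hn := val_fibotorial p n hp hodd
  have hmn' := val_fibotorial p (m+n) hp hodd
  set v := padicValNat p (Nat.fib t) with hvdef
  set qm := m / t with hqmdef
  set qn := n / t with hqndef
  have hBlt : qm + qn + c < p ^ (qm + qn + c) :=
    Nat.lt_pow_self hp.one_lt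
  have hkum := kummer p qm qn c (qm + qn + c) hc1 hBlt
  have hset := carry_set_eq p qm qn c (qm + qn + c) hp.two_le hBlt
  rw [hset, Set.ncard_coe_finset]
  rw [hmn', hm, hn, hdiv, hkum] at hval
  have hexp : (qm + qn + c) * v = qm*v + qn*v + c*v := by ring
  rw [hexp] at hval
  omega
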